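/- The group P^{±rad}_{p,q,r} := (𝒢^{(0)×} ∪ 𝒢^{(1)×}) (𝒢^0 + rad 𝒢)^× is equal to the set {T ∈ 𝒢^× : (T^{-1})^̂ T ∈ (𝒢^0 + rad 𝒢)^×}, where (T^{-1})^̂ denotes the grade involution applied to T^{-1}. -/

import Mathlib

open Pointwise

noncomputable section

namespace ClGA

variable (𝔽 : Type*) [RCLike 𝔽] (p q r : ℕ)

/-- The diagonal weights: `p` ones, `q` minus-ones, `r` zeros. -/
def w : Fin (p + q + r) → 𝔽 := fun i =>
  if (i : ℕ) < p then 1 else if (i : ℕ) < p + q then -1 else 0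

/-- The quadratic form on `𝔽^n` whose Gram matrix is `diag(1,…,1,−1,…,−1,0,…,0)`. -/
def Q : QuadraticForm 𝔽 (Fin (p + q + r) → 𝔽) :=
  QuadraticMap.weightedSumSquares 𝔽 (w 𝔽 p q r)

/-- The degenerate Clifford geometric algebra `𝒢 = 𝒢_{p,q,r}`. -/
abbrev G := CliffordAlgebra (Q 𝔽 p q r)

/-- The generators `e_a`, `a = 1, …, n`. -/
def e (a : Fin (p + q + r)) : G 𝔽 p q r :=
  CliffordAlgebra.ι (Q 𝔽 p q r) (Pi.single a 1)

/-- The even subspace `𝒢^{(0)}`: the `+1`-eigenspace of the grade involution. -/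
def Geven : Submodule 𝔽 (G 𝔽 p q r) where
  carrier := {x | CliffordAlgebra.involute x = x}
  add_mem' := by
    intro a b ha hb
    simp only [Set.mem_setOf_eq, map_add] at ha hb ⊢
    rw [ha, hb]
  zero_mem' := by simp
  smul_mem' := by
    intro c x hx
    simp only [Set.mem_setOf_eq, map_smul] at hx ⊢
    rw [hx]

/-- The odd subspace `𝒢^{(1)}`: the `−1`-eigenspace of the grade involution. -/
def Godd : Submodule 𝔽 (G 𝔽 p q r) where
  carrier := {x | CliffordAlgebra.involute x = -x}
  add_mem' := by
    intro a b ha hb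
    simp only [Set.mem_setOf_eq, map_add] at ha hb ⊢
    rw [ha, hb, neg_add]
  zero_mem' := by simp
  smul_mem' := by
    intro c x hx
    simp only [Set.mem_setOf_eq, map_smul] at hx ⊢
    rw [hx, smul_neg]

/-- The grade-1 subspace `𝒢^1`, the span of the generators. -/
def G1 : Submodule 𝔽 (G 𝔽 p q r) := Submodule.span 𝔽 (Set.range (e 𝔽 p q r))

/-- The scalar (grade-0) subspace `𝒢^0 = 𝔽·1`. -/
def G0 : Submodule 𝔽 (G 𝔽 p q r) := Submodule.span 𝔽 {(1 : G 𝔽 p q r)}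

/-- The element `e_{1…n} = e_1 e_2 ⋯ e_n`. -/
def eTop : G 𝔽 p q r := (List.ofFn (e 𝔽 p q r)).prod

/-- The grade-`n` subspace `𝒢^n = 𝔽·e_{1…n}`. -/
def Gn : Submodule 𝔽 (G 𝔽 p q r) := Submodule.span 𝔽 {eTop 𝔽 p q r}

/-- The Grassmann subalgebra `Λ_r` generated by the null generators. -/
def Λr : Subalgebra 𝔽 (G 𝔽 p q r) :=
  Algebra.adjoin 𝔽 {x | ∃ a : Fin (p + q + r), p + q ≤ (a : ℕ) ∧ x = e 𝔽 p q r a}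

/-- `Λ_r` viewed as a subspace of `𝒢`. -/
def Λrs : Submodule 𝔽 (G 𝔽 p q r) := Subalgebra.toSubmodule (Λr 𝔽 p q r)

/-- The even part `Λ_r^{(0)} = Λ_r ∩ 𝒢^{(0)}`. -/
def Λr0 : Submodule 𝔽 (G 𝔽 p q r) := Λrs 𝔽 p q r ⊓ Geven 𝔽 p q r

/-- The Jacobson radical `rad 𝒢` of `𝒢`: the two-sided ideal generated by the
null generators. -/
def radG : Submodule 𝔽 (G 𝔽 p q r) :=
  Submodule.span 𝔽 {x | ∃ (u v : G 𝔽 p q r) (a : Fin (p + q + r)),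
    p + q ≤ (a : ℕ) ∧ x = u * e 𝔽 p q r a * v}

/-- `rad 𝒢^{(0)} = rad 𝒢 ∩ 𝒢^{(0)}`. -/
def radG0 : Submodule 𝔽 (G 𝔽 p q r) := radG 𝔽 p q r ⊓ Geven 𝔽 p q r

/-- For a subset `S ⊆ 𝒢`, `S^×` denotes those elements of `S` invertible in `𝒢`. -/
def ux (S : Set (G 𝔽 p q r)) : Set (G 𝔽 p q r) := {x ∈ S | IsUnit x}

/-- `𝒢^{(0)×} ∪ 𝒢^{(1)×}` (the group `P^±_{p,q,r}`). -/
def Epm : Set (G 𝔽 p q r) :=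
  ux 𝔽 p q r ↑(Geven 𝔽 p q r) ∪ ux 𝔽 p q r ↑(Godd 𝔽 p q r)

/-- `(T⁻¹)^̂ · T`, the grade involution of the inverse times `T`. -/
def tw (T : G 𝔽 p q r) : G 𝔽 p q r :=
  CliffordAlgebra.involute (Ring.inverse T) * T

/-- The invertible elements `T` with `T W T⁻¹ ⊆ W` (adjoint representation). -/
def gammaAd (W : Submodule 𝔽 (G 𝔽 p q r)) : Set (G 𝔽 p q r) :=
  {T | IsUnit T ∧ ∀ U ∈ W, T * U * Ring.inverse T ∈ W}

/-- The invertible elements `T` with `T̂ W T⁻¹ ⊆ W` (twisted adjoint representation). -/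
def gammaTw (W : Submodule 𝔽 (G 𝔽 p q r)) : Set (G 𝔽 p q r) :=
  {T | IsUnit T ∧ ∀ U ∈ W, CliffordAlgebra.involute T * U * Ring.inverse T ∈ W}

section Aux

open CliffordAlgebra Polynomial

lemma w_null {i : Fin (p + q + r)} (h : p + q ≤ (i : ℕ)) : w 𝔽 p q r i = 0 := by
  simp [w, Nat.not_lt.2 h, Nat.not_lt.2 (le_trans (Nat.le_add_right p q) h)]

/-- Projection onto the first `p+q` coordinates. -/
def prj : (Fin (p + q + r) → 𝔽) →ₗ[𝔽] (Fin (p + q + r) → 𝔽) where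
  toFun v i := if (i : ℕ) < p + q then v i else 0
  map_add' u v := by funext i; by_cases h : (i : ℕ) < p + q <;> simp [h]
  map_smul' c v := by funext i; by_cases h : (i : ℕ) < p + q <;> simp [h]

lemma prj_apply (v : Fin (p + q + r) → 𝔽) (i : Fin (p + q + r)) :
    prj 𝔽 p q r v i = if (i : ℕ) < p + q then v i else 0 := rfl

lemma Q_prj (v : Fin (p + q + r) → 𝔽) : Q 𝔽 p q r (prj 𝔽 p q r v) = Q 𝔽 p q r v := by
  simp only [Q, QuadraticMap.weightedSumSquares_apply]
  refine Finset.sum_congr rfl fun i _ => ?_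
  by_cases h : (i : ℕ) < p + q
  · simp [prj_apply, h]
  · rw [w_null 𝔽 p q r (Nat.not_lt.1 h)]; simp

lemma Q_sub_prj (v : Fin (p + q + r) → 𝔽) : Q 𝔽 p q r (v - prj 𝔽 p q r v) = 0 := by
  simp only [Q, QuadraticMap.weightedSumSquares_apply]
  refine Finset.sum_eq_zero fun i _ => ?_
  by_cases h : (i : ℕ) < p + q
  · simp [prj_apply, h]
  · rw [w_null 𝔽 p q r (Nat.not_lt.1 h)]; simp

lemma polar_prj (v : Fin (p + q + r) → 𝔽) :
    QuadraticMap.polar (Q 𝔽 p q r) (prj 𝔽 p q r v) (v - prj 𝔽 p q r v) = 0 := by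
  rw [QuadraticMap.polar, add_sub_cancel, Q_prj, Q_sub_prj]
  ring

/-- The algebra endomorphism of `𝒢` killing the null generators. -/
def Fh : G 𝔽 p q r →ₐ[𝔽] G 𝔽 p q r :=
  CliffordAlgebra.lift _ ⟨(ι (Q 𝔽 p q r)).comp (prj 𝔽 p q r), fun v => by
    rw [LinearMap.comp_apply, ι_sq_scalar, Q_prj]⟩

lemma prj_single_null {a : Fin (p + q + r)} (h : p + q ≤ (a : ℕ)) :
    prj 𝔽 p q r (Pi.single a (1 : 𝔽)) = 0 := by
  funext i
  rw [prj_apply, Pi.zero_apply]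
  by_cases hi : (i : ℕ) < p + q
  · rw [if_pos hi, Pi.single_apply, if_neg]
    rintro rfl; exact absurd h (Nat.not_le.2 hi)
  · rw [if_neg hi]

lemma Fh_e_null {a : Fin (p + q + r)} (h : p + q ≤ (a : ℕ)) :
    Fh 𝔽 p q r (e 𝔽 p q r a) = 0 := by
  rw [e, Fh, CliffordAlgebra.lift_ι_apply, LinearMap.comp_apply, prj_single_null 𝔽 p q r h,
    map_zero]

end Aux
section Aux2

open CliffordAlgebra Polynomial

/-- The linear map `v ↦ C (ι (π v)) + X ⬝ C (ι (v - π v))` into `𝒢[X]`. -/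
def psiF : (Fin (p + q + r) → 𝔽) →ₗ[𝔽] Polynomial (G 𝔽 p q r) where
  toFun v := Polynomial.C (ι (Q 𝔽 p q r) (prj 𝔽 p q r v))
    + Polynomial.X * Polynomial.C (ι (Q 𝔽 p q r) (v - prj 𝔽 p q r v))
  map_add' u v := by
    simp only [map_add, add_sub_add_comm, mul_add]
    abel
  map_smul' c v := by
    simp only [map_smul, RingHom.id_apply, ← smul_sub, smul_add, ← mul_smul_comm,
      Polynomial.smul_C]

lemma psiF_apply (v : Fin (p + q + r) → 𝔽) :
    psiF 𝔽 p q r v = Polynomial.C (ι (Q 𝔽 p q r) (prj 𝔽 p q r v))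
      + Polynomial.X * Polynomial.C (ι (Q 𝔽 p q r) (v - prj 𝔽 p q r v)) := rfl

lemma psiF_sq (v : Fin (p + q + r) → 𝔽) :
    psiF 𝔽 p q r v * psiF 𝔽 p q r v = algebraMap 𝔽 (Polynomial (G 𝔽 p q r)) (Q 𝔽 p q r v) := by
  rw [psiF_apply]
  set a := ι (Q 𝔽 p q r) (prj 𝔽 p q r v) with ha
  set b := ι (Q 𝔽 p q r) (v - prj 𝔽 p q r v) with hb
  have e1 : C a * (X * C b) = X * C (a * b) := by
    rw [← mul_assoc, ← X_mul, mul_assoc, ← map_mul]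
  have e2 : (X * C b) * C a = X * C (b * a) := by rw [mul_assoc, ← map_mul]
  have e3 : (X * C b) * (X * C b) = X * X * C (b * b) := by
    rw [mul_assoc, ← mul_assoc (C b) X, ← X_mul, mul_assoc, ← map_mul, ← mul_assoc]
  have hbb : b * b = 0 := by rw [hb, ι_sq_scalar, Q_sub_prj, map_zero]
  have hab : a * b + b * a = 0 := by rw [ha, hb, ι_mul_ι_add_swap, polar_prj, map_zero]
  have haa : a * a = algebraMap 𝔽 (G 𝔽 p q r) (Q 𝔽 p q r v) := by
    rw [ha, ι_sq_scalar, Q_prj]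
  clear_value a b
  rw [add_mul, mul_add, mul_add, e1, e2, e3, ← map_mul, hbb, map_zero, mul_zero, add_zero,
    haa]
  conv_lhs => rw [add_assoc]
  rw [← mul_add]
  rw [← map_add]
  rw [hab, map_zero, mul_zero, add_zero]
  rw [Polynomial.algebraMap_apply]

/-- The algebra map `Ψ : 𝒢 → 𝒢[X]` scaling the null generators by `X`. -/
def Psi : G 𝔽 p q r →ₐ[𝔽] Polynomial (G 𝔽 p q r) :=
  CliffordAlgebra.lift _ ⟨psiF 𝔽 p q r, psiF_sq 𝔽 p q r⟩

lemma Psi_ι (v : Fin (p + q + r) → 𝔽) :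
    Psi 𝔽 p q r (ι (Q 𝔽 p q r) v) = psiF 𝔽 p q r v := by
  rw [Psi, CliffordAlgebra.lift_ι_apply]

/-- Evaluation of polynomials at `1`, as an algebra map. -/
def eps : Polynomial (G 𝔽 p q r) →ₐ[𝔽] G 𝔽 p q r :=
  Polynomial.eval₂AlgHom (AlgHom.id 𝔽 (G 𝔽 p q r)) 1 fun g => Commute.one_right _

lemma eps_C (g : G 𝔽 p q r) : eps 𝔽 p q r (Polynomial.C g) = g := by
  simp [eps]

lemma eps_X : eps 𝔽 p q r Polynomial.X = 1 := by
  simp [eps]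

lemma eps_psi (x : G 𝔽 p q r) : eps 𝔽 p q r (Psi 𝔽 p q r x) = x := by
  have : (eps 𝔽 p q r).comp (Psi 𝔽 p q r) = AlgHom.id 𝔽 (G 𝔽 p q r) := by
    refine CliffordAlgebra.hom_ext (LinearMap.ext fun v => ?_)
    simp only [LinearMap.comp_apply, AlgHom.toLinearMap_apply, AlgHom.comp_apply,
      AlgHom.coe_id, id_eq]
    rw [Psi_ι, psiF_apply, map_add, map_mul, eps_C, eps_C, eps_X, one_mul, ← map_add,
      add_sub_cancel]
  calc eps 𝔽 p q r (Psi 𝔽 p q r x) = ((eps 𝔽 p q r).comp (Psi 𝔽 p q r)) x := rfl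
  _ = x := by rw [this]; rfl

lemma Psi_e_null {a : Fin (p + q + r)} (h : p + q ≤ (a : ℕ)) :
    Psi 𝔽 p q r (e 𝔽 p q r a) = Polynomial.X * Polynomial.C (e 𝔽 p q r a) := by
  rw [e, Psi_ι, psiF_apply, prj_single_null 𝔽 p q r h, map_zero, map_zero, sub_zero, zero_add]

lemma degree_Psi_e_le (a : Fin (p + q + r)) : (Psi 𝔽 p q r (e 𝔽 p q r a)).degree ≤ 1 := by
  rw [e, Psi_ι, psiF_apply]
  exact (Polynomial.degree_add_le _ _).trans (max_le (Polynomial.degree_C_le.trans zero_le_one)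
    ((Polynomial.degree_mul_le _ _).trans
      ((add_le_add Polynomial.degree_X_le Polynomial.degree_C_le).trans_eq (add_zero 1))))

end Aux2
section Aux3

open CliffordAlgebra Polynomial

lemma radG_mul_left (g : G 𝔽 p q r) {x : G 𝔽 p q r} (hx : x ∈ radG 𝔽 p q r) :
    g * x ∈ radG 𝔽 p q r := by
  have : radG 𝔽 p q r ≤ Submodule.comap (LinearMap.mulLeft 𝔽 g) (radG 𝔽 p q r) := by
    rw [radG, Submodule.span_le]
    rintro x ⟨u, v, a, ha, rfl⟩
    refine Submodule.subset_span ⟨g * u, v, a, ha, ?_⟩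
    show g * (u * e 𝔽 p q r a * v) = g * u * e 𝔽 p q r a * v
    rw [mul_assoc, mul_assoc, mul_assoc]
  exact this hx

lemma radG_mul_right (g : G 𝔽 p q r) {x : G 𝔽 p q r} (hx : x ∈ radG 𝔽 p q r) :
    x * g ∈ radG 𝔽 p q r := by
  have : radG 𝔽 p q r ≤ Submodule.comap (LinearMap.mulRight 𝔽 g) (radG 𝔽 p q r) := by
    rw [radG, Submodule.span_le]
    rintro x ⟨u, v, a, ha, rfl⟩
    refine Submodule.subset_span ⟨u, v * g, a, ha, ?_⟩
    show u * e 𝔽 p q r a * v * g = u * e 𝔽 p q r a * (v * g)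
    rw [mul_assoc]
  exact this hx

lemma radG_involute {x : G 𝔽 p q r} (hx : x ∈ radG 𝔽 p q r) :
    CliffordAlgebra.involute x ∈ radG 𝔽 p q r := by
  have : radG 𝔽 p q r ≤ Submodule.comap
      (CliffordAlgebra.involute (Q := Q 𝔽 p q r)).toLinearMap (radG 𝔽 p q r) := by
    rw [radG, Submodule.span_le]
    rintro x ⟨u, v, a, ha, rfl⟩
    refine Submodule.subset_span ⟨-CliffordAlgebra.involute u, CliffordAlgebra.involute v,
      a, ha, ?_⟩
    show CliffordAlgebra.involute (u * e 𝔽 p q r a * v) = _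
    rw [map_mul, map_mul]
    show _ * CliffordAlgebra.involute (ι _ _) * _ = _
    rw [CliffordAlgebra.involute_ι]
    show _ * -e 𝔽 p q r a * _ = _
    rw [mul_neg, neg_mul, neg_mul, neg_mul]
  exact this hx

lemma radG_Fh {x : G 𝔽 p q r} (hx : x ∈ radG 𝔽 p q r) : Fh 𝔽 p q r x = 0 := by
  have : radG 𝔽 p q r ≤ LinearMap.ker (Fh 𝔽 p q r).toLinearMap := by
    rw [radG, Submodule.span_le]
    rintro x ⟨u, v, a, ha, rfl⟩
    show Fh 𝔽 p q r (u * e 𝔽 p q r a * v) = 0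
    rw [map_mul, map_mul, Fh_e_null 𝔽 p q r ha, mul_zero, zero_mul]
  exact this hx

lemma radG_coeff_zero {x : G 𝔽 p q r} (hx : x ∈ radG 𝔽 p q r) :
    (Psi 𝔽 p q r x).coeff 0 = 0 := by
  have : radG 𝔽 p q r ≤ LinearMap.ker
      (((Polynomial.lcoeff (G 𝔽 p q r) 0).restrictScalars 𝔽).comp (Psi 𝔽 p q r).toLinearMap) := by
    rw [radG, Submodule.span_le]
    rintro x ⟨u, v, a, ha, rfl⟩
    show (Psi 𝔽 p q r (u * e 𝔽 p q r a * v)).coeff 0 = 0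
    rw [map_mul, map_mul, Psi_e_null 𝔽 p q r ha, Polynomial.mul_coeff_zero,
      Polynomial.mul_coeff_zero, Polynomial.mul_coeff_zero, Polynomial.coeff_X_zero,
      zero_mul, mul_zero, zero_mul]
  exact this hx

end Aux3
section Aux4

open CliffordAlgebra Polynomial

/-- The span of the products of generators with strictly increasing indices. -/
def Tsp : Submodule 𝔽 (G 𝔽 p q r) :=
  Submodule.span 𝔽 {x | ∃ l : List (Fin (p + q + r)), l.Pairwise (· < ·)
    ∧ x = (l.map (e 𝔽 p q r)).prod}

lemma mul_e_sorted (l : List (Fin (p + q + r))) (hl : l.Pairwise (· < ·)) :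
    ∀ a : Fin (p + q + r), e 𝔽 p q r a * (l.map (e 𝔽 p q r)).prod ∈ Submodule.span 𝔽
      {x | ∃ m : List (Fin (p + q + r)), m.Pairwise (· < ·) ∧ (∀ c ∈ m, c = a ∨ c ∈ l)
        ∧ x = (m.map (e 𝔽 p q r)).prod} := by
  induction hl with
  | nil =>
    intro a
    refine Submodule.subset_span ⟨[a], List.pairwise_singleton _ _, ?_, ?_⟩
    · intro c hc; left; simpa using hc
    · simp
  | @cons b l hb hl' ih =>
    intro a
    rcases lt_trichotomy a b with hab | rfl | hab
    · refine Submodule.subset_span ⟨a :: b :: l, ?_, ?_, ?_⟩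
      · refine List.pairwise_cons.2 ⟨?_, List.pairwise_cons.2 ⟨hb, hl'⟩⟩
        intro c hc
        rcases List.mem_cons.1 hc with rfl | hc
        · exact hab
        · exact hab.trans (hb c hc)
      · intro c hc
        rcases List.mem_cons.1 hc with rfl | hc
        · exact Or.inl rfl
        · exact Or.inr hc
      · simp
    · rw [List.map_cons, List.prod_cons, ← mul_assoc, e, ι_sq_scalar, ← Algebra.smul_def]
      exact Submodule.smul_mem _ _ (Submodule.subset_span
        ⟨l, hl', fun c hc => Or.inr (List.mem_cons_of_mem _ hc), rfl⟩)
    · rw [List.map_cons, List.prod_cons, ← mul_assoc, e, e, ι_mul_ι_comm, sub_mul,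
        ← Algebra.smul_def]
      refine Submodule.sub_mem _ (Submodule.smul_mem _ _ (Submodule.subset_span
        ⟨l, hl', fun c hc => Or.inr (List.mem_cons_of_mem _ hc), rfl⟩)) ?_
      rw [mul_assoc]
      have hstep : Submodule.span 𝔽
          {x | ∃ m : List (Fin (p + q + r)), m.Pairwise (· < ·) ∧ (∀ c ∈ m, c = a ∨ c ∈ l)
            ∧ x = (m.map (e 𝔽 p q r)).prod}
          ≤ Submodule.comap (LinearMap.mulLeft 𝔽 (e 𝔽 p q r b)) (Submodule.span 𝔽
            {x | ∃ m : List (Fin (p + q + r)), m.Pairwise (· < ·)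
              ∧ (∀ c ∈ m, c = a ∨ c ∈ b :: l) ∧ x = (m.map (e 𝔽 p q r)).prod}) := by
        rw [Submodule.span_le]
        rintro x ⟨m, hm, hmem, rfl⟩
        refine Submodule.subset_span ⟨b :: m, ?_, ?_, ?_⟩
        · refine List.pairwise_cons.2 ⟨?_, hm⟩
          intro c hc
          rcases hmem c hc with rfl | hc'
          · exact hab
          · exact hb c hc'
        · intro c hc
          rcases List.mem_cons.1 hc with rfl | hc
          · exact Or.inr List.mem_cons_self
          · rcases hmem c hc with rfl | hc'
            · exact Or.inl rfl
            · exact Or.inr (List.mem_cons_of_mem _ hc')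
        · simp
      exact hstep (ih a)

lemma e_mul_Tsp (a : Fin (p + q + r)) {t : G 𝔽 p q r} (ht : t ∈ Tsp 𝔽 p q r) :
    e 𝔽 p q r a * t ∈ Tsp 𝔽 p q r := by
  have : Tsp 𝔽 p q r ≤ Submodule.comap (LinearMap.mulLeft 𝔽 (e 𝔽 p q r a)) (Tsp 𝔽 p q r) := by
    rw [Tsp, Submodule.span_le]
    rintro x ⟨l, hl, rfl⟩
    simp only [SetLike.mem_coe, Submodule.mem_comap, LinearMap.mulLeft_apply]
    refine Submodule.span_mono ?_ (mul_e_sorted 𝔽 p q r l hl a)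
    rintro y ⟨m, hm, _, rfl⟩
    exact ⟨m, hm, rfl⟩
  exact this ht

lemma one_mem_Tsp : (1 : G 𝔽 p q r) ∈ Tsp 𝔽 p q r :=
  Submodule.subset_span ⟨[], List.Pairwise.nil, by simp⟩

lemma ι_mul_Tsp (v : Fin (p + q + r) → 𝔽) {t : G 𝔽 p q r} (ht : t ∈ Tsp 𝔽 p q r) :
    ι (Q 𝔽 p q r) v * t ∈ Tsp 𝔽 p q r := by
  have hv : v = ∑ a : Fin (p + q + r), v a • (Pi.single a (1 : 𝔽) : Fin (p + q + r) → 𝔽) := by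
    funext j
    rw [Finset.sum_apply]
    simp [Pi.single_apply, smul_ite]
  rw [hv, map_sum, Finset.sum_mul]
  refine Submodule.sum_mem _ fun a _ => ?_
  rw [map_smul, smul_mul_assoc]
  exact Submodule.smul_mem _ _ (e_mul_Tsp 𝔽 p q r a ht)

lemma Tsp_eq_top : Tsp 𝔽 p q r = ⊤ := by
  rw [eq_top_iff, ← CliffordAlgebra.iSup_ι_range_eq_top (Q := Q 𝔽 p q r)]
  refine iSup_le fun i => ?_
  induction i with
  | zero =>
    rw [pow_zero, Submodule.one_eq_span, Submodule.span_le]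
    rintro x rfl
    · exact one_mem_Tsp 𝔽 p q r
  | succ n ihn =>
    rw [pow_succ']
    refine Submodule.mul_le.2 fun m hm t ht => ?_
    obtain ⟨v, rfl⟩ := hm
    exact ι_mul_Tsp 𝔽 p q r v (ihn ht)

lemma degree_Psi_prod (l : List (Fin (p + q + r))) :
    (Psi 𝔽 p q r ((l.map (e 𝔽 p q r)).prod)).degree ≤ (l.length : WithBot ℕ) := by
  induction l with
  | nil => simp
  | cons a l ih =>
    rw [List.map_cons, List.prod_cons, map_mul]
    refine (Polynomial.degree_mul_le _ _).trans ?_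
    refine (add_le_add (degree_Psi_e_le 𝔽 p q r a) ih).trans ?_
    rw [List.length_cons]
    rw [show ((l.length + 1 : ℕ) : WithBot ℕ) = 1 + (l.length : WithBot ℕ) by push_cast; ring]

lemma degree_Psi_le (x : G 𝔽 p q r) :
    (Psi 𝔽 p q r x).degree ≤ ((p + q + r : ℕ) : WithBot ℕ) := by
  have hx : x ∈ Tsp 𝔽 p q r := by rw [Tsp_eq_top]; exact Submodule.mem_top
  have hle : Tsp 𝔽 p q r ≤ Submodule.comap ((Psi 𝔽 p q r).toLinearMap)
      ((Polynomial.degreeLE (G 𝔽 p q r) ((p + q + r : ℕ) : WithBot ℕ)).restrictScalars 𝔽) := by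
    rw [Tsp, Submodule.span_le]
    rintro y ⟨l, hl, rfl⟩
    have hlen : l.length ≤ p + q + r := by
      have hnd : l.Nodup := List.Pairwise.imp (fun h => ne_of_lt h) hl
      simpa using hnd.length_le_card
    have : (Psi 𝔽 p q r ((l.map (e 𝔽 p q r)).prod)).degree ≤ ((p + q + r : ℕ) : WithBot ℕ) :=
      (degree_Psi_prod 𝔽 p q r l).trans (by exact_mod_cast hlen)
    simpa [Polynomial.mem_degreeLE] using this
  have := hle hx
  simpa [Polynomial.mem_degreeLE] using this

lemma radG_nilpotent {x : G 𝔽 p q r} (hx : x ∈ radG 𝔽 p q r) :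
    x ^ (p + q + r + 1) = 0 := by
  set n := p + q + r with hn
  obtain ⟨g, hg⟩ : Polynomial.X ∣ Psi 𝔽 p q r x :=
    Polynomial.X_dvd_iff.2 (radG_coeff_zero 𝔽 p q r hx)
  have hcomm : Commute (Polynomial.X : Polynomial (G 𝔽 p q r)) g := Polynomial.X_mul
  have hpow : Psi 𝔽 p q r (x ^ (n + 1)) = Polynomial.X ^ (n + 1) * g ^ (n + 1) := by
    rw [map_pow, hg, hcomm.mul_pow]
  have hdeg : (Polynomial.X ^ (n + 1) * g ^ (n + 1) : Polynomial (G 𝔽 p q r)).degree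
      ≤ (n : WithBot ℕ) := hpow ▸ degree_Psi_le 𝔽 p q r _
  have hg0 : g ^ (n + 1) = 0 := by
    ext d
    rw [Polynomial.coeff_zero, ← Polynomial.coeff_X_pow_mul (g ^ (n + 1)) (n + 1) d]
    refine Polynomial.coeff_eq_zero_of_degree_lt (lt_of_le_of_lt hdeg ?_)
    exact_mod_cast (by omega : n < d + (n + 1))
  have : Psi 𝔽 p q r (x ^ (n + 1)) = 0 := by rw [hpow, hg0, mul_zero]
  have := congrArg (eps 𝔽 p q r) this
  rwa [eps_psi, map_zero] at this

end Aux4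
section Aux5

open CliffordAlgebra Polynomial

lemma G_nontrivial : Nontrivial (G 𝔽 p q r) := by
  have : Invertible (2 : 𝔽) := invertibleOfNonzero two_ne_zero
  infer_instance

lemma radG_unit_one_add {x : G 𝔽 p q r} (hx : x ∈ radG 𝔽 p q r) : IsUnit (1 + x) :=
  IsNilpotent.isUnit_one_add ⟨p + q + r + 1, radG_nilpotent 𝔽 p q r hx⟩

lemma unit_of_scalar_add {c : 𝔽} (hc : c ≠ 0) {x : G 𝔽 p q r} (hx : x ∈ radG 𝔽 p q r) :
    IsUnit (c • (1 : G 𝔽 p q r) + x) := by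
  have h1 : c • (1 : G 𝔽 p q r) + x = c • (1 + c⁻¹ • x) := by
    rw [smul_add, smul_smul, mul_inv_cancel₀ hc, one_smul]
  rw [h1, Algebra.smul_def]
  exact (IsUnit.map (algebraMap 𝔽 (G 𝔽 p q r)) (isUnit_iff_ne_zero.2 hc)).mul
    (radG_unit_one_add 𝔽 p q r (Submodule.smul_mem _ _ hx))

/-- Membership in `𝒢⁰ ⊔ rad 𝒢`. -/
lemma mem_S_iff {x : G 𝔽 p q r} :
    x ∈ G0 𝔽 p q r ⊔ radG 𝔽 p q r ↔ ∃ c : 𝔽, ∃ y ∈ radG 𝔽 p q r, x = c • 1 + y := by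
  constructor
  · intro hx
    obtain ⟨u, hu, v, hv, rfl⟩ := Submodule.mem_sup.1 hx
    obtain ⟨c, rfl⟩ := Submodule.mem_span_singleton.1 hu
    exact ⟨c, v, hv, rfl⟩
  · rintro ⟨c, y, hy, rfl⟩
    exact Submodule.mem_sup.2 ⟨c • 1, Submodule.smul_mem _ _ (Submodule.mem_span_singleton_self _),
      y, hy, rfl⟩

lemma mul_mem_S {x y : G 𝔽 p q r} (hx : x ∈ G0 𝔽 p q r ⊔ radG 𝔽 p q r)
    (hy : y ∈ G0 𝔽 p q r ⊔ radG 𝔽 p q r) : x * y ∈ G0 𝔽 p q r ⊔ radG 𝔽 p q r := by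
  obtain ⟨c, j, hj, rfl⟩ := (mem_S_iff 𝔽 p q r).1 hx
  obtain ⟨d, k, hk, rfl⟩ := (mem_S_iff 𝔽 p q r).1 hy
  refine (mem_S_iff 𝔽 p q r).2 ⟨c * d, c • k + j * (d • 1 + k), ?_, ?_⟩
  · exact Submodule.add_mem _ (Submodule.smul_mem _ _ hk) (radG_mul_right 𝔽 p q r _ hj)
  · rw [add_mul, smul_mul_assoc, one_mul, smul_add, smul_smul]
    abel

lemma involute_mem_S {x : G 𝔽 p q r} (hx : x ∈ G0 𝔽 p q r ⊔ radG 𝔽 p q r) :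
    CliffordAlgebra.involute x ∈ G0 𝔽 p q r ⊔ radG 𝔽 p q r := by
  obtain ⟨c, j, hj, rfl⟩ := (mem_S_iff 𝔽 p q r).1 hx
  refine (mem_S_iff 𝔽 p q r).2 ⟨c, CliffordAlgebra.involute j, radG_involute 𝔽 p q r hj, ?_⟩
  rw [map_add, map_smul, map_one]

lemma S_unit_decomp {x : G 𝔽 p q r} (hx : x ∈ G0 𝔽 p q r ⊔ radG 𝔽 p q r) (hu : IsUnit x) :
    ∃ c : 𝔽, c ≠ 0 ∧ ∃ y ∈ radG 𝔽 p q r, x = c • 1 + y := by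
  obtain ⟨c, y, hy, rfl⟩ := (mem_S_iff 𝔽 p q r).1 hx
  refine ⟨c, ?_, y, hy, rfl⟩
  rintro rfl
  have h0 : Fh 𝔽 p q r ((0 : 𝔽) • 1 + y) = 0 := by
    rw [map_add, map_smul, zero_smul, zero_add, radG_Fh 𝔽 p q r hy]
  have := G_nontrivial 𝔽 p q r
  have hunit := hu.map (Fh 𝔽 p q r)
  rw [h0] at hunit
  exact not_isUnit_zero hunit

/-- Uniqueness of two-sided inverses. -/
lemma inverse_eq {a b : G 𝔽 p q r} (h1 : a * b = 1) (h2 : b * a = 1) : Ring.inverse a = b := by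
  have ha : IsUnit a := ⟨⟨a, b, h1, h2⟩, rfl⟩
  calc Ring.inverse a = Ring.inverse a * (a * b) := by rw [h1, mul_one]
  _ = (Ring.inverse a * a) * b := by rw [mul_assoc]
  _ = b := by rw [Ring.inverse_mul_cancel _ ha, one_mul]

lemma S_inverse_mem {x : G 𝔽 p q r} (hx : x ∈ G0 𝔽 p q r ⊔ radG 𝔽 p q r) (hu : IsUnit x) :
    Ring.inverse x ∈ G0 𝔽 p q r ⊔ radG 𝔽 p q r := by
  obtain ⟨c, hc, y, hy, hxe⟩ := S_unit_decomp 𝔽 p q r hx hu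
  refine (mem_S_iff 𝔽 p q r).2 ⟨c⁻¹, Ring.inverse x * (-(c⁻¹ • y)), ?_, ?_⟩
  · exact radG_mul_left 𝔽 p q r _ (Submodule.neg_mem _ (Submodule.smul_mem _ _ hy))
  · have h1 : c⁻¹ • x = 1 + c⁻¹ • y := by
      rw [hxe, smul_add, smul_smul, inv_mul_cancel₀ hc, one_smul]
    have : Ring.inverse x * (c⁻¹ • x) = c⁻¹ • 1 := by
      rw [mul_smul_comm, Ring.inverse_mul_cancel _ hu]
    calc Ring.inverse x = Ring.inverse x * (1 + c⁻¹ • y) + Ring.inverse x * (-(c⁻¹ • y)) := by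
          rw [mul_add, mul_neg, mul_one]; abel
    _ = c⁻¹ • (1 : G 𝔽 p q r) + Ring.inverse x * (-(c⁻¹ • y)) := by rw [← h1, this]

end Aux5
section Aux6

open CliffordAlgebra

lemma involute_inverse {u : G 𝔽 p q r} (hu : IsUnit u) :
    CliffordAlgebra.involute (Ring.inverse u) = Ring.inverse (CliffordAlgebra.involute u) := by
  refine (inverse_eq 𝔽 p q r ?_ ?_).symm
  · rw [← map_mul, Ring.mul_inverse_cancel _ hu, map_one]
  · rw [← map_mul, Ring.inverse_mul_cancel _ hu, map_one]

lemma inverse_neg' {E : G 𝔽 p q r} (hE : IsUnit E) :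
    Ring.inverse (-E) = -(Ring.inverse E) := by
  refine inverse_eq 𝔽 p q r ?_ ?_
  · rw [neg_mul_neg, Ring.mul_inverse_cancel _ hE]
  · rw [neg_mul_neg, Ring.inverse_mul_cancel _ hE]

end Aux6

/-- `P^{±rad}_{p,q,r} = (𝒢^{(0)×} ∪ 𝒢^{(1)×})(𝒢^0 + rad 𝒢)^×
  = {T ∈ 𝒢^× : (T⁻¹)^̂ T ∈ (𝒢^0 + rad 𝒢)^×}`. -/
theorem stmt9 (hn : 1 ≤ p + q + r) :
    Epm 𝔽 p q r * ux 𝔽 p q r ↑(G0 𝔽 p q r ⊔ radG 𝔽 p q r)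
      = {T : G 𝔽 p q r | IsUnit T ∧ tw 𝔽 p q r T ∈ ux 𝔽 p q r ↑(G0 𝔽 p q r ⊔ radG 𝔽 p q r)} := by
  ext T
  constructor
  · intro hT
    rw [Set.mem_mul] at hT
    obtain ⟨E, hE, u, hu, rfl⟩ := hT
    obtain ⟨huS, huU⟩ := hu
    have huS' : u ∈ G0 𝔽 p q r ⊔ radG 𝔽 p q r := huS
    have hEU : IsUnit E := hE.elim (fun h => h.2) (fun h => h.2)
    refine ⟨hEU.mul huU, ?_⟩
    have hiu1 : u * Ring.inverse u = 1 := Ring.mul_inverse_cancel _ huU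
    have hiu2 : Ring.inverse u * u = 1 := Ring.inverse_mul_cancel _ huU
    have hiE1 : E * Ring.inverse E = 1 := Ring.mul_inverse_cancel _ hEU
    have hiE2 : Ring.inverse E * E = 1 := Ring.inverse_mul_cancel _ hEU
    have hiuU : IsUnit (Ring.inverse u) := ⟨⟨Ring.inverse u, u, hiu2, hiu1⟩, rfl⟩
    have hinv : Ring.inverse (E * u) = Ring.inverse u * Ring.inverse E := by
      refine inverse_eq 𝔽 p q r ?_ ?_
      · rw [mul_assoc, ← mul_assoc u, hiu1, one_mul, hiE1]
      · rw [mul_assoc, ← mul_assoc (Ring.inverse E), hiE2, one_mul, hiu2]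
    have hbase : CliffordAlgebra.involute (Ring.inverse u) * u
        ∈ G0 𝔽 p q r ⊔ radG 𝔽 p q r :=
      mul_mem_S 𝔽 p q r (involute_mem_S 𝔽 p q r (S_inverse_mem 𝔽 p q r huS' huU)) huS'
    have hbaseU : IsUnit (CliffordAlgebra.involute (Ring.inverse u) * u) :=
      (hiuU.map (CliffordAlgebra.involute (Q := Q 𝔽 p q r))).mul huU
    rw [tw, hinv, map_mul]
    rcases hE with hE | hE
    · have hEe : CliffordAlgebra.involute E = E := hE.1
      have h3 : CliffordAlgebra.involute (Ring.inverse E) = Ring.inverse E := by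
        rw [involute_inverse 𝔽 p q r hEU, hEe]
      have h4 : CliffordAlgebra.involute (Ring.inverse u) * CliffordAlgebra.involute (Ring.inverse E)
          * (E * u) = CliffordAlgebra.involute (Ring.inverse u) * u := by
        rw [h3, mul_assoc, ← mul_assoc (Ring.inverse E), hiE2, one_mul]
      rw [h4]
      exact ⟨hbase, hbaseU⟩
    · have hEe : CliffordAlgebra.involute E = -E := hE.1
      have h3 : CliffordAlgebra.involute (Ring.inverse E) = -(Ring.inverse E) := by
        rw [involute_inverse 𝔽 p q r hEU, hEe, inverse_neg' 𝔽 p q r hEU]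
      have h4 : CliffordAlgebra.involute (Ring.inverse u) * CliffordAlgebra.involute (Ring.inverse E)
          * (E * u) = -(CliffordAlgebra.involute (Ring.inverse u) * u) := by
        rw [h3, mul_neg, neg_mul, mul_assoc, ← mul_assoc (Ring.inverse E), hiE2, one_mul]
      rw [h4]
      exact ⟨Submodule.neg_mem _ hbase, hbaseU.neg⟩
  · rintro ⟨hTu, hsS, hsU⟩
    have hsS' : tw 𝔽 p q r T ∈ G0 𝔽 p q r ⊔ radG 𝔽 p q r := hsS
    set s : G 𝔽 p q r := tw 𝔽 p q r T with hs_def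
    set iT : G 𝔽 p q r := Ring.inverse T with hiT
    have hs : s = CliffordAlgebra.involute iT * T := rfl
    have hT1 : T * iT = 1 := Ring.mul_inverse_cancel _ hTu
    have hT2 : iT * T = 1 := Ring.inverse_mul_cancel _ hTu
    have hi1 : CliffordAlgebra.involute iT * CliffordAlgebra.involute T = 1 := by
      rw [← map_mul, hT2, map_one]
    have hi2 : CliffordAlgebra.involute T * CliffordAlgebra.involute iT = 1 := by
      rw [← map_mul, hT1, map_one]
    have hsinv1 : s * (iT * CliffordAlgebra.involute T) = 1 := by
      rw [hs, mul_assoc, ← mul_assoc T iT, hT1, one_mul, hi1]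
    have hsinv2 : (iT * CliffordAlgebra.involute T) * s = 1 := by
      rw [hs, mul_assoc, ← mul_assoc (CliffordAlgebra.involute T), hi2, one_mul, hT2]
    have hinvs : Ring.inverse s = iT * CliffordAlgebra.involute T :=
      inverse_eq 𝔽 p q r hsinv1 hsinv2
    have hinvols : CliffordAlgebra.involute s = iT * CliffordAlgebra.involute T := by
      rw [hs, map_mul, CliffordAlgebra.involute_involute]
    have hss : CliffordAlgebra.involute s * s = 1 := by
      rw [hinvols]; exact hsinv2
    have hs1 : s * Ring.inverse s = 1 := Ring.mul_inverse_cancel _ hsU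
    have hs2 : Ring.inverse s * s = 1 := Ring.inverse_mul_cancel _ hsU
    have hTinvol : CliffordAlgebra.involute T = T * Ring.inverse s := by
      rw [hinvs, ← mul_assoc, hT1, one_mul]
    obtain ⟨c, hc, y, hy, hse⟩ := S_unit_decomp 𝔽 p q r hsS' hsU
    rw [Set.mem_mul]
    by_cases hcm : c = -1
    · -- odd case : u = 1 - s
      set u : G 𝔽 p q r := 1 - s with hu_def
      have huS : u ∈ G0 𝔽 p q r ⊔ radG 𝔽 p q r := by
        refine (mem_S_iff 𝔽 p q r).2 ⟨1 - c, -y, Submodule.neg_mem _ hy, ?_⟩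
        rw [hu_def, hse, sub_smul, one_smul]
        abel
      have huU : IsUnit u := by
        have : u = (1 - c) • (1 : G 𝔽 p q r) + (-y) := by
          rw [hu_def, hse, sub_smul, one_smul]; abel
        rw [this]
        refine unit_of_scalar_add 𝔽 p q r ?_ (Submodule.neg_mem _ hy)
        rw [hcm]; norm_num
      have hiu1 : u * Ring.inverse u = 1 := Ring.mul_inverse_cancel _ huU
      have hiu2 : Ring.inverse u * u = 1 := Ring.inverse_mul_cancel _ huU
      have hinvolu : CliffordAlgebra.involute u = -(u * Ring.inverse s) := by
        have h5 : CliffordAlgebra.involute u * s = -u := by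
          rw [hu_def, map_sub, map_one, sub_mul, one_mul, hss, neg_sub]
        calc CliffordAlgebra.involute u
            = CliffordAlgebra.involute u * s * Ring.inverse s := by
              rw [mul_assoc, hs1, mul_one]
        _ = -(u * Ring.inverse s) := by rw [h5, neg_mul]
      have hinvoliu : CliffordAlgebra.involute (Ring.inverse u) = -(s * Ring.inverse u) := by
        rw [involute_inverse 𝔽 p q r huU, hinvolu]
        refine inverse_eq 𝔽 p q r ?_ ?_
        · rw [neg_mul_neg, mul_assoc, ← mul_assoc (Ring.inverse s), hs2, one_mul, hiu1]
        · rw [neg_mul_neg, mul_assoc, ← mul_assoc (Ring.inverse u), hiu2, one_mul, hs1]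
      refine ⟨T * Ring.inverse u, Or.inr ⟨?_, hTu.mul ⟨⟨Ring.inverse u, u, hiu2, hiu1⟩, rfl⟩⟩,
        u, ⟨huS, huU⟩, ?_⟩
      · show CliffordAlgebra.involute (T * Ring.inverse u) = -(T * Ring.inverse u)
        rw [map_mul, hinvoliu, hTinvol, mul_neg, mul_assoc, ← mul_assoc (Ring.inverse s),
          hs2, one_mul]
      · rw [mul_assoc, hiu2, mul_one]
    · -- even case : u = 1 + s
      set u : G 𝔽 p q r := 1 + s with hu_def
      have huS : u ∈ G0 𝔽 p q r ⊔ radG 𝔽 p q r := by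
        refine (mem_S_iff 𝔽 p q r).2 ⟨1 + c, y, hy, ?_⟩
        rw [hu_def, hse, add_smul, one_smul]
        abel
      have huU : IsUnit u := by
        have : u = (1 + c) • (1 : G 𝔽 p q r) + y := by
          rw [hu_def, hse, add_smul, one_smul]; abel
        rw [this]
        refine unit_of_scalar_add 𝔽 p q r ?_ hy
        intro h
        exact hcm (by linear_combination h)
      have hiu1 : u * Ring.inverse u = 1 := Ring.mul_inverse_cancel _ huU
      have hiu2 : Ring.inverse u * u = 1 := Ring.inverse_mul_cancel _ huU
      have hinvolu : CliffordAlgebra.involute u = u * Ring.inverse s := by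
        have h5 : CliffordAlgebra.involute u * s = u := by
          rw [hu_def, map_add, map_one, add_mul, one_mul, hss]; exact add_comm s 1
        calc CliffordAlgebra.involute u
            = CliffordAlgebra.involute u * s * Ring.inverse s := by
              rw [mul_assoc, hs1, mul_one]
        _ = u * Ring.inverse s := by rw [h5]
      have hinvoliu : CliffordAlgebra.involute (Ring.inverse u) = s * Ring.inverse u := by
        rw [involute_inverse 𝔽 p q r huU, hinvolu]
        refine inverse_eq 𝔽 p q r ?_ ?_
        · rw [mul_assoc, ← mul_assoc (Ring.inverse s), hs2, one_mul, hiu1]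
        · rw [mul_assoc, ← mul_assoc (Ring.inverse u), hiu2, one_mul, hs1]
      refine ⟨T * Ring.inverse u, Or.inl ⟨?_, hTu.mul ⟨⟨Ring.inverse u, u, hiu2, hiu1⟩, rfl⟩⟩,
        u, ⟨huS, huU⟩, ?_⟩
      · show CliffordAlgebra.involute (T * Ring.inverse u) = T * Ring.inverse u
        rw [map_mul, hinvoliu, hTinvol, mul_assoc, ← mul_assoc (Ring.inverse s), hs2, one_mul]
      · rw [mul_assoc, hiu2, mul_one]

end ClGA
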